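/- Let p and q be projections on a complex Hilbert space H such that p − q is a compact operator and ‖p − q‖ < 1. Then there exists a unitary U ∈ B(H) with U − 1 compact such that U p U* = q; in particular the essential codimension [p:q] is 0. (A concrete U is obtained from the polar decomposition of a = (1−q)(1−p) + q p, which is invertible and satisfies a p = q a.) -/

import Mathlib

open ContinuousLinearMap Module

/-- A projection on a Hilbert space: a self-adjoint idempotent bounded operator. -/
def IsProjection {H : Type*} [NormedAddCommGroup H] [InnerProductSpace ℂ H]
    [CompleteSpace H] (p : H →L[ℂ] H) : Prop :=
  IsSelfAdjoint p ∧ p * p = p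

/-- The essential codimension of two projections `p, q` with `p - q` compact:
`[p:q] = dim ker (p - q - 1) - dim ker (p - q + 1)`. -/
noncomputable def essCodim {H : Type*} [NormedAddCommGroup H] [InnerProductSpace ℂ H]
    [CompleteSpace H] (p q : H →L[ℂ] H) : ℤ :=
  (finrank ℂ (LinearMap.ker ((p - q - 1 : H →L[ℂ] H) : H →ₗ[ℂ] H)) : ℤ) -
    (finrank ℂ (LinearMap.ker ((p - q + 1 : H →L[ℂ] H) : H →ₗ[ℂ] H)) : ℤ)

lemma commute_aeval_aux {A : Type*} [Ring A] [Algebra ℝ A] (c x : A) (hx : Commute x c)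
    (P : Polynomial ℝ) : Commute x (Polynomial.aeval c P) := by
  induction P using Polynomial.induction_on with
  | C r => simpa using (Algebra.commute_algebraMap_left r x).symm
  | add P1 P2 hP1 hP2 => rw [map_add]; exact hP1.add_right hP2
  | monomial n r hmon =>
      simp only [map_mul, map_pow, Polynomial.aeval_C, Polynomial.aeval_X]
      have h : Commute x (algebraMap ℝ A r) := (Algebra.commutes r x).symm
      exact h.mul_right (hx.pow_right (n + 1))

lemma commute_cfc_aux {H : Type*} [NormedAddCommGroup H] [InnerProductSpace ℂ H] [CompleteSpace H]
    (c x : H →L[ℂ] H) (hc : IsSelfAdjoint c) (hx : Commute x c) (f : ℝ → ℝ)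
    (hf : ContinuousOn f (spectrum ℝ c)) : Commute x (cfc f c) := by
  rw [cfc_apply f c hc hf]
  set s := spectrum ℝ c with hs
  have hcompact : CompactSpace s := by
    rw [hs]; exact isCompact_iff_compactSpace.mp (spectrum.isCompact c)
  set T : Set C(s, ℝ) := {g | Commute x (cfcHom hc (R := ℝ) g)} with hT
  have hclosed : IsClosed T := by
    have hcont : Continuous fun g : C(s, ℝ) =>
        x * cfcHom hc (R := ℝ) g - cfcHom hc (R := ℝ) g * x := by
      have h1 : Continuous (cfcHom hc (R := ℝ)) := (cfcHom_isClosedEmbedding hc).continuous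
      fun_prop
    have heq : T = (fun g : C(s, ℝ) =>
        x * cfcHom hc (R := ℝ) g - cfcHom hc (R := ℝ) g * x) ⁻¹' {0} := by
      ext g
      simp only [hT, Set.mem_setOf_eq, Set.mem_preimage, Set.mem_singleton_iff, sub_eq_zero]
      exact ⟨fun h => h, fun h => h⟩
    rw [heq]
    exact isClosed_singleton.preimage hcont
  have hpoly : (polynomialFunctions s : Set C(s, ℝ)) ⊆ T := by
    rintro g hg
    rw [polynomialFunctions_coe] at hg
    obtain ⟨P, rfl⟩ := hg
    have h1 : cfcHom hc (R := ℝ) (Polynomial.toContinuousMapOnAlgHom s P) =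
        Polynomial.aeval c P := by
      have h2 := cfc_polynomial (R := ℝ) P c hc
      rw [cfc_apply _ c hc (by fun_prop)] at h2
      rw [← h2]
      congr 1
    rw [hT, Set.mem_setOf_eq, h1]
    exact commute_aeval_aux c x hx P
  have hmem : (⟨_, hf.restrict⟩ : C(s, ℝ)) ∈ closure (polynomialFunctions s : Set C(s, ℝ)) := by
    rw [← Subalgebra.topologicalClosure_coe, polynomialFunctions.topologicalClosure s]
    trivial
  exact hclosed.closure_subset_iff.mpr hpoly hmem

set_option maxHeartbeats 2000000 in
/-- If `p, q` are projections with `p - q` compact and `‖p - q‖ < 1`, then there is a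
unitary `U` with `U - 1` compact such that `U p U* = q`; in particular `[p:q] = 0`. -/
theorem exists_unitary_of_norm_lt_one {H : Type*} [NormedAddCommGroup H]
    [InnerProductSpace ℂ H] [CompleteSpace H] (p q : H →L[ℂ] H)
    (hp : IsProjection p) (hq : IsProjection q)
    (hpq : IsCompactOperator (⇑(p - q)))
    (hnorm : ‖p - q‖ < 1) :
    (∃ U : H →L[ℂ] H, adjoint U * U = 1 ∧ U * adjoint U = 1 ∧
      IsCompactOperator (⇑(U - 1)) ∧ U * p * adjoint U = q) ∧
    essCodim p q = 0 := by
  obtain ⟨hp1, hp2⟩ := hp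
  obtain ⟨hq1, hq2⟩ := hq
  -- the essential codimension part
  have hcodim : essCodim p q = 0 := by
    have hker1 : LinearMap.ker ((p - q - 1 : H →L[ℂ] H) : H →ₗ[ℂ] H) = ⊥ := by
      rw [Submodule.eq_bot_iff]
      intro x hx
      have h1 : (p - q) x - x = 0 := by
        simpa using hx
      have h2 : (p - q) x = x := by rwa [sub_eq_zero] at h1
      by_contra hx0
      have h3 : ‖x‖ ≤ ‖p - q‖ * ‖x‖ := by
        conv_lhs => rw [← h2]
        exact (p - q).le_opNorm x
      have h4 : 0 < ‖x‖ := norm_pos_iff.mpr hx0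
      nlinarith
    have hker2 : LinearMap.ker ((p - q + 1 : H →L[ℂ] H) : H →ₗ[ℂ] H) = ⊥ := by
      rw [Submodule.eq_bot_iff]
      intro x hx
      have h1 : (p - q) x + x = 0 := by
        simpa using hx
      have h2 : (p - q) x = -x := by rwa [add_eq_zero_iff_eq_neg] at h1
      by_contra hx0
      have h3 : ‖x‖ ≤ ‖p - q‖ * ‖x‖ := by
        have := (p - q).le_opNorm x
        rwa [h2, norm_neg] at this
      have h4 : 0 < ‖x‖ := norm_pos_iff.mpr hx0
      nlinarith
    rw [essCodim, hker1, hker2]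
    simp
  refine ⟨?_, hcodim⟩
  -- algebra preliminaries
  have hp2' : ∀ x : H →L[ℂ] H, p * (p * x) = p * x := fun x => by rw [← mul_assoc, hp2]
  have hq2' : ∀ x : H →L[ℂ] H, q * (q * x) = q * x := fun x => by rw [← mul_assoc, hq2]
  set k : H →L[ℂ] H := (p - q) * (p - q) with hk
  set c : H →L[ℂ] H := 1 - k with hc
  set a : H →L[ℂ] H := q * p + (1 - q) * (1 - p) with ha
  have hd_sa : IsSelfAdjoint (p - q) := hp1.sub hq1
  have hc_sa : IsSelfAdjoint c := by
    rw [IsSelfAdjoint, hc, hk, star_sub, star_one, star_mul, hd_sa.star_eq]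
  have hstar_a : star a = p * q + (1 - p) * (1 - q) := by
    simp only [ha, star_add, star_mul, star_sub, star_one, hp1.star_eq, hq1.star_eq]
  have hap : a * p = q * a := by
    rw [ha]
    noncomm_ring
    simp only [mul_assoc, hp2, hq2, hp2', hq2']
    abel
  have haa : a * star a = c := by
    rw [ha, hstar_a, hc, hk]
    noncomm_ring
    simp only [mul_assoc, hp2, hq2, hp2', hq2']
    abel
  have ha'a : star a * a = c := by
    rw [ha, hstar_a, hc, hk]
    noncomm_ring
    simp only [mul_assoc, hp2, hq2, hp2', hq2']
    abel
  have hcomm_pc : Commute p c := by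
    unfold Commute SemiconjBy
    rw [hc, hk]
    noncomm_ring
    simp only [mul_assoc, hp2, hq2, hp2', hq2']
    abel
  have hcomm_qc : Commute q c := by
    unfold Commute SemiconjBy
    rw [hc, hk]
    noncomm_ring
    simp only [mul_assoc, hp2, hq2, hp2', hq2']
    abel
  have hcomm_ac : Commute a c := by
    unfold Commute SemiconjBy
    rw [ha, hc, hk]
    noncomm_ring
    simp only [mul_assoc, hp2, hq2, hp2', hq2']
    abel
  have hcomm_a'c : Commute (star a) c := by
    have := congrArg star hcomm_ac.eq
    rw [star_mul, star_mul, hc_sa.star_eq] at this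
    exact this.symm
  -- norm and spectrum facts
  have hknorm : ‖k‖ < 1 := by
    have h1 : ‖k‖ ≤ ‖p - q‖ * ‖p - q‖ := norm_mul_le _ _
    nlinarith [norm_nonneg (p - q)]
  have hspec : spectrum ℝ c ⊆ Set.Ioi 0 := by
    intro x hx
    have h1 : c = algebraMap ℝ (H →L[ℂ] H) 1 + -k := by
      rw [map_one, hc, sub_eq_add_neg]
    rw [h1, ← spectrum.singleton_add_eq] at hx
    obtain ⟨y, hy, z, hz, rfl⟩ := Set.mem_add.mp hx
    rw [Set.mem_singleton_iff] at hy
    subst hy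
    have h2 : ‖z‖ ≤ ‖(-k : H →L[ℂ] H)‖ * ‖(1 : H →L[ℂ] H)‖ :=
      spectrum.norm_le_norm_mul_of_mem hz
    have h3 : ‖(1 : H →L[ℂ] H)‖ ≤ 1 := norm_id_le
    have h4 : ‖(-k : H →L[ℂ] H)‖ = ‖k‖ := norm_neg k
    have h5 : |z| < 1 := by
      rw [← Real.norm_eq_abs]
      nlinarith [norm_nonneg (-k : H →L[ℂ] H), norm_nonneg (1 : H →L[ℂ] H)]
    have := abs_lt.mp h5
    simp only [Set.mem_Ioi]
    linarith
  -- the inverse square root of c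
  set f : ℝ → ℝ := fun x => (Real.sqrt x)⁻¹ with hf
  have hfcont : ContinuousOn f (spectrum ℝ c) := by
    apply ContinuousOn.inv₀ (Real.continuous_sqrt.continuousOn)
    intro x hx
    exact (Real.sqrt_pos.mpr (hspec hx)).ne'
  set b : H →L[ℂ] H := cfc f c with hb
  have hb_sa : IsSelfAdjoint b := cfc_predicate _ _
  have hbbc : b * b * c = 1 := by
    have e1 : cfc (fun x => f x * f x) c = b * b := cfc_mul f f c hfcont hfcont
    have e2 : cfc (fun x => (f x * f x) * x) c
        = cfc (fun x => f x * f x) c * cfc (fun x : ℝ => x) c :=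
      cfc_mul _ _ c (hfcont.mul hfcont) (continuousOn_id' _)
    have e3 : cfc (fun x : ℝ => x) c = c := cfc_id' ℝ c hc_sa
    have e4 : cfc (fun x => (f x * f x) * x) c = 1 := by
      have : cfc (fun x => (f x * f x) * x) c = cfc (fun _ : ℝ => (1 : ℝ)) c := by
        apply cfc_congr
        intro x hx
        have hx0 : 0 < x := hspec hx
        have hs0 : Real.sqrt x ≠ 0 := (Real.sqrt_pos.mpr hx0).ne'
        rw [hf]
        field_simp
        rw [Real.sq_sqrt hx0.le]
      rw [this, cfc_const 1 c hc_sa, map_one]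
    rw [e1, e3] at e2
    rw [← e2]
    exact e4
  -- commutation with b
  have hcomm_pb : Commute p b := commute_cfc_aux c p hc_sa hcomm_pc f hfcont
  have hcomm_qb : Commute q b := commute_cfc_aux c q hc_sa hcomm_qc f hfcont
  have hcomm_ab : Commute a b := commute_cfc_aux c a hc_sa hcomm_ac f hfcont
  have hcomm_a'b : Commute (star a) b := commute_cfc_aux c (star a) hc_sa hcomm_a'c f hfcont
  have hcomm_cb : Commute c b := commute_cfc_aux c c hc_sa (Commute.refl c) f hfcont
  have hcbb : c * (b * b) = 1 := by
    rw [(hcomm_cb.mul_right hcomm_cb).eq]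
    exact hbbc
  -- the unitary
  set U : H →L[ℂ] H := b * a with hU
  have hUadj : adjoint U = star a * b := by
    rw [← star_eq_adjoint, hU, star_mul, hb_sa.star_eq]
  refine ⟨U, ?_, ?_, ?_, ?_⟩
  · -- adjoint U * U = 1
    rw [hUadj, hU]
    calc star a * b * (b * a) = star a * (b * b * a) := by rw [mul_assoc, mul_assoc]
      _ = star a * (a * (b * b)) := by rw [(hcomm_ab.mul_right hcomm_ab).eq]
      _ = star a * a * (b * b) := by rw [mul_assoc]
      _ = c * (b * b) := by rw [ha'a]
      _ = 1 := hcbb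
  · -- U * adjoint U = 1
    rw [hUadj, hU]
    calc b * a * (star a * b) = b * (a * star a) * b := by rw [mul_assoc, mul_assoc, mul_assoc]
      _ = b * c * b := by rw [haa]
      _ = c * b * b := by rw [hcomm_cb.eq]
      _ = c * (b * b) := by rw [mul_assoc]
      _ = 1 := hcbb
  · -- U - 1 compact
    have hk_cpt : IsCompactOperator ⇑k := by
      have := hpq.comp_clm (p - q)
      rwa [hk, show ⇑((p - q) * (p - q)) = ⇑(p - q) ∘ ⇑(p - q) from rfl]
    have ha1 : a - 1 = q * (p - q) - (p - q) * p := by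
      rw [ha]
      noncomm_ring
      rw [hp2, hq2]
    have ha1_cpt : IsCompactOperator ⇑(a - 1) := by
      rw [ha1]
      have h1 : IsCompactOperator ⇑(q * (p - q)) := by
        have := hpq.clm_comp q
        rwa [show ⇑(q * (p - q)) = ⇑q ∘ ⇑(p - q) from rfl]
      have h2 : IsCompactOperator ⇑((p - q) * p) := by
        have := hpq.comp_clm p
        rwa [show ⇑((p - q) * p) = ⇑(p - q) ∘ ⇑p from rfl]
      have := h1.sub h2
      rwa [show ⇑(q * (p - q) - (p - q) * p) = ⇑(q * (p - q)) - ⇑((p - q) * p) by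
        ext x; simp]
    set g : ℝ → ℝ := fun x => -(Real.sqrt x * (Real.sqrt x + 1))⁻¹ with hg
    have hgcont : ContinuousOn g (spectrum ℝ c) := by
      apply ContinuousOn.neg
      apply ContinuousOn.inv₀
      · fun_prop
      · intro x hx
        have hx0 : 0 < Real.sqrt x := Real.sqrt_pos.mpr (hspec hx)
        positivity
    have hb1 : b - 1 = cfc g c * (c - 1) := by
      have e1 : b - 1 = cfc (fun x => f x - 1) c := by
        rw [cfc_sub _ _ c hfcont (continuousOn_const), cfc_const 1 c hc_sa, map_one, hb]
      have e2 : c - 1 = cfc (fun x : ℝ => x - 1) c := by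
        rw [cfc_sub _ _ c (continuousOn_id' _) (continuousOn_const),
          cfc_id' ℝ c hc_sa, cfc_const 1 c hc_sa, map_one]
      rw [e1, e2, ← cfc_mul _ _ c hgcont (show ContinuousOn (fun x : ℝ => x - 1) (spectrum ℝ c) from
        (continuousOn_id' _).sub continuousOn_const)]
      apply cfc_congr
      intro x hx
      have hx0 : 0 < x := hspec hx
      have hs0 : 0 < Real.sqrt x := Real.sqrt_pos.mpr hx0
      have hxs : Real.sqrt x * Real.sqrt x = x := Real.mul_self_sqrt hx0.le
      rw [hf, hg]
      field_simp
      nlinarith [hxs]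
    have hb1_cpt : IsCompactOperator ⇑(b - 1) := by
      rw [hb1]
      have hc1_cpt : IsCompactOperator ⇑(c - 1) := by
        have : IsCompactOperator ⇑(-k) := hk_cpt.neg
        rwa [show ⇑(c - 1) = ⇑(-k) by rw [hc]; ext x; simp]
      have := hc1_cpt.clm_comp (cfc g c)
      rwa [show ⇑(cfc g c * (c - 1)) = ⇑(cfc g c) ∘ ⇑(c - 1) from rfl]
    have hU1 : U - 1 = b * (a - 1) + (b - 1) := by
      rw [hU]; noncomm_ring
    rw [hU1]
    have h1 : IsCompactOperator ⇑(b * (a - 1)) := by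
      have := ha1_cpt.clm_comp b
      rwa [show ⇑(b * (a - 1)) = ⇑b ∘ ⇑(a - 1) from rfl]
    have := h1.add hb1_cpt
    rwa [show ⇑(b * (a - 1) + (b - 1)) = ⇑(b * (a - 1)) + ⇑(b - 1) by ext x; simp]
  · -- U p U* = q
    rw [hUadj, hU]
    calc b * a * p * (star a * b) = b * (a * p) * (star a * b) := by rw [mul_assoc b a p]
      _ = b * (q * a) * (star a * b) := by rw [hap]
      _ = b * q * (a * star a) * b := by
          rw [← mul_assoc, ← mul_assoc, mul_assoc (b * q) a (star a)]
      _ = b * q * c * b := by rw [haa]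
      _ = q * b * c * b := by rw [hcomm_qb.eq]
      _ = q * (b * c * b) := by rw [mul_assoc, mul_assoc, mul_assoc]
      _ = q * (c * b * b) := by rw [hcomm_cb.eq]
      _ = q * (c * (b * b)) := by rw [mul_assoc]
      _ = q := by rw [hcbb, mul_one]
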